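/- Let q be a real number with q > 0 and q ≠ 1, let n ≥ d ≥ 2 be integers, and let W(x,y) = x^n + Σ_{i=d}^{n} A_i x^{n-i} y^i be a homogeneous polynomial with complex coefficients, A_d ≠ 0, satisfying W((x+(q-1)y)/√q, (x-y)/√q) = -W(x,y) identically. Then d ≤ n/2 + 1, i.e., 2d ≤ n + 2. -/

import Mathlib

open Polynomial in
private lemma coeff_one_add_CX_pow (a : ℂ) (ha : a ≠ 0) (m k : ℕ) :
    ((1 + C a * X : Polynomial ℂ) ^ m).coeff k = a ^ k * m.choose k := by
  have h1 : (1 + C a * X : Polynomial ℂ) = C a * (X + C a⁻¹) := by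
    rw [mul_add, ← C_mul, mul_inv_cancel₀ ha, C_1]; ring
  rw [h1, mul_pow, ← C_pow, coeff_C_mul, coeff_X_add_C_pow]
  rcases le_or_gt k m with h | h
  · rw [inv_pow, ← mul_assoc]
    congr 1
    have h2 : a ^ k * a ^ (m - k) = a ^ m := pow_mul_pow_sub a h
    field_simp
    linear_combination -h2
  · rw [Nat.choose_eq_zero_of_lt h]; simp

/-- Inequality (14): for a formal weight enumerator
`W(x,y) = x^n + ∑_{i=d}^n A_i x^{n-i} y^i` (encoded via coefficients
`A 0 = 1`, `A i = 0` for `0 < i < d`, `A d ≠ 0`) with `n ≥ d ≥ 2` and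
`W^{σ_q} = -W`, one has `d ≤ n/2 + 1`, i.e. `2d ≤ n + 2`. -/
theorem fwe_d_le_half_n_add_one (q : ℝ) (hq0 : 0 < q) (hq1 : q ≠ 1)
    (n d : ℕ) (hd2 : 2 ≤ d) (hdn : d ≤ n) (A : ℕ → ℂ)
    (hA0 : A 0 = 1) (hAz : ∀ i, 0 < i → i < d → A i = 0) (hAd : A d ≠ 0)
    (hanti : ∀ x y : ℂ,
      (∑ i ∈ Finset.range (n + 1),
        A i * ((x + ((q : ℂ) - 1) * y) / (Real.sqrt q : ℂ)) ^ (n - i) *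
          ((x - y) / (Real.sqrt q : ℂ)) ^ i)
        = -∑ i ∈ Finset.range (n + 1), A i * x ^ (n - i) * y ^ i) :
    2 * d ≤ n + 2 := by
  by_contra hcon
  push_neg at hcon
  set c : ℝ := Real.sqrt q with hcdef
  have hcpos : 0 < c := Real.sqrt_pos.mpr hq0
  set cc : ℂ := (c : ℂ) with hccdef
  have hcc0 : cc ≠ 0 := by
    simp [hccdef, Complex.ofReal_ne_zero]
    exact ne_of_gt hcpos
  have hccq : cc ^ 2 = (q : ℂ) := by
    have h : c ^ 2 = q := Real.sq_sqrt hq0.le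
    rw [hccdef, ← h]; push_cast; ring
  -- Step 1: one-variable identity from hanti at (1 + cc z, 1)
  have key : ∀ z : ℂ, (∑ i ∈ Finset.range (n+1), A i * (z + cc)^(n-i) * z^i)
      = -∑ i ∈ Finset.range (n+1), A i * (1 + cc*z)^(n-i) := by
    intro z
    have h := hanti (1 + cc*z) 1
    have e1 : ((1 + cc*z) + ((q:ℂ)-1)*1) / cc = z + cc := by
      rw [← hccq]; field_simp; ring
    have e2 : ((1 + cc*z) - 1) / cc = z := by
      field_simp; ring
    rw [e1, e2] at h
    simpa using h
  -- Step 2: polynomial identity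
  open Polynomial in
  have hPQ : (∑ i ∈ Finset.range (n+1), C (A i) * (X + C cc)^(n-i) * X^i)
      = -∑ i ∈ Finset.range (n+1), C (A i) * (1 + C cc * X)^(n-i) := by
    apply Polynomial.funext
    intro z
    simp only [eval_neg, eval_finset_sum, eval_mul, eval_pow, eval_add, eval_C, eval_X,
      eval_one]
    exact key z
  -- Step 3: compare coefficients at k = d - 1
  set k := d - 1 with hkdef
  have hkd : k < d := by omega
  have hkn : k ≤ n := by omega
  have hndk : n - d < k := by omega
  have hP : (∑ i ∈ Finset.range (n+1),
      Polynomial.C (A i) * (Polynomial.X + Polynomial.C cc)^(n-i) * Polynomial.X^i).coeff k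
      = cc^(n-k) * (n.choose k) := by
    rw [Polynomial.finset_sum_coeff]
    rw [Finset.sum_eq_single 0]
    · simp only [Nat.sub_zero, pow_zero, mul_one, hA0, Polynomial.coeff_C_mul, one_mul,
        Polynomial.coeff_X_add_C_pow]
    · intro i hi h0
      rcases lt_or_ge i d with hid | hid
      · rw [hAz i (Nat.pos_of_ne_zero h0) hid]; simp
      · rw [mul_assoc, Polynomial.coeff_C_mul, Polynomial.coeff_mul_X_pow']
        rw [if_neg (by omega)]
        ring
    · intro h; exact absurd (Finset.mem_range.mpr (by omega)) h
  have hQ : (∑ i ∈ Finset.range (n+1),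
      Polynomial.C (A i) * (1 + Polynomial.C cc * Polynomial.X)^(n-i)).coeff k
      = cc^k * (n.choose k) := by
    rw [Polynomial.finset_sum_coeff]
    rw [Finset.sum_eq_single 0]
    · simp only [Nat.sub_zero, hA0, Polynomial.coeff_C_mul, one_mul,
        coeff_one_add_CX_pow cc hcc0]
    · intro i hi h0
      rcases lt_or_ge i d with hid | hid
      · rw [hAz i (Nat.pos_of_ne_zero h0) hid]; simp
      · rw [Polynomial.coeff_C_mul, coeff_one_add_CX_pow cc hcc0,
          Nat.choose_eq_zero_of_lt (by omega)]
        simp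
    · intro h; exact absurd (Finset.mem_range.mpr (by omega)) h
  have hcoeff : cc^(n-k) * (n.choose k) = -(cc^k * (n.choose k)) := by
    rw [← hP, ← hQ, hPQ, Polynomial.coeff_neg]
  have hch : (0:ℝ) < n.choose k := by
    exact_mod_cast Nat.choose_pos hkn
  have hne : ((n.choose k : ℂ)) ≠ 0 := by
    exact_mod_cast (Nat.choose_pos hkn).ne'
  have this : cc^(n-k) + cc^k = 0 := by
    have h3 : cc^(n-k) = -cc^k := by
      apply mul_right_cancel₀ hne
      rw [hcoeff]; ring
    rw [h3]; ring
  rw [hccdef] at this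
  have hr : (c^(n-k) + c^k : ℝ) = 0 := by
    exact_mod_cast (by push_cast at this ⊢; exact this : ((c^(n-k) + c^k : ℝ) : ℂ) = 0)
  nlinarith [pow_pos hcpos (n-k), pow_pos hcpos k]
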